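/- Let 𝓗 be a complex Hilbert space, T > 0, and let P : [0, T] → (𝓗 →L[ℂ] 𝓗) be continuously differentiable with each P(s) an orthogonal projection (self-adjoint and idempotent). Let u, v : [0, T] → 𝓗 be differentiable with u'(s) = P'(s) u(s) and v'(s) = P'(s) v(s) for all s, and with P(0) u(0) = u(0) and P(0) v(0) = v(0). Then for every s ∈ [0, T]: P(s) u(s) = u(s) and ⟨u(s), v(s)⟩ = ⟨u(0), v(0)⟩. In particular, parallel transport by u̇ = Ṗ u maps an orthonormal family spanning the range of P(0) to an orthonormal family spanning the range of P(s). -/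

import Mathlib

open Set

/-- Auxiliary: the solution of `u' = P' u` starting in the range of `P 0` stays in the range. -/
lemma stmt_7_aux {𝓗 : Type*} [NormedAddCommGroup 𝓗] [InnerProductSpace ℂ 𝓗] [CompleteSpace 𝓗]
    (T : ℝ)
    (P P' : ℝ → (𝓗 →L[ℂ] 𝓗))
    (hP : ∀ s ∈ Set.Icc (0:ℝ) T, HasDerivWithinAt P (P' s) (Set.Icc (0:ℝ) T) s)
    (hP'cont : ContinuousOn P' (Set.Icc (0:ℝ) T))
    (hPP'P : ∀ s ∈ Set.Icc (0:ℝ) T, P s * P' s * P s = 0)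
    (u : ℝ → 𝓗)
    (hu : ∀ s ∈ Set.Icc (0:ℝ) T, HasDerivWithinAt u (P' s (u s)) (Set.Icc (0:ℝ) T) s)
    (h0T : (0:ℝ) ∈ Set.Icc (0:ℝ) T)
    (hu0 : P 0 (u 0) = u 0) :
    ∀ s ∈ Set.Icc (0:ℝ) T, P s (u s) = u s := by
  have hPcont : ContinuousOn P (Set.Icc 0 T) := fun s hs => (hP s hs).continuousWithinAt
  obtain ⟨K, hK⟩ := IsCompact.exists_bound_of_continuousOn isCompact_Icc
    (f := fun s => (‖P s‖ * ‖P' s‖ : ℝ)) (hPcont.norm.mul hP'cont.norm)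
  set w : ℝ → 𝓗 := fun s => P s (u s) - u s with hw
  have hw0 : w 0 = 0 := by simp [hw, hu0]
  set d : ℝ → 𝓗 := fun s => P s (P' s (u s)) with hd
  have hwderiv : ∀ s ∈ Set.Icc (0:ℝ) T, HasDerivWithinAt w (d s) (Set.Icc (0:ℝ) T) s := by
    intro s hs
    have hQ := ((ContinuousLinearMap.restrictScalarsIsometry ℂ 𝓗 𝓗 ℝ
      ℝ).toContinuousLinearMap.hasFDerivAt).comp_hasDerivWithinAt s (hP s hs)
    have h := (hQ.clm_apply (hu s hs)).sub (hu s hs)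
    have h2 : HasDerivWithinAt w
        ((P' s) (u s) + (P s) ((P' s) (u s)) - (P' s) (u s)) (Set.Icc (0:ℝ) T) s := h
    simpa [add_sub_cancel_left] using h2
  have hrew : ∀ s ∈ Set.Icc (0:ℝ) T, d s = -(P s (P' s (w s))) := by
    intro s hs
    have hX : P s (P' s (P s (u s))) = 0 := by
      have := congrArg (fun A : 𝓗 →L[ℂ] 𝓗 => A (u s)) (hPP'P s hs)
      simpa [ContinuousLinearMap.mul_apply] using this
    have huw : P' s (u s) = P' s (P s (u s)) - P' s (w s) := by
      rw [← map_sub]; congr 1; simp [hw]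
    show P s (P' s (u s)) = _
    rw [huw, map_sub, hX, zero_sub]
  have hcontw : ContinuousOn w (Set.Icc 0 T) := fun s hs => (hwderiv s hs).continuousWithinAt
  have hb := norm_le_gronwallBound_of_norm_deriv_right_le (f := w) (f' := d)
    (δ := 0) (K := K) (ε := 0) (a := 0) (b := T) hcontw
    (fun t ht => (hwderiv t (Ico_subset_Icc_self ht)).mono_of_mem_nhdsWithin
      (Icc_mem_nhdsGE_of_mem ht))
    (by simp [hw0])
    (fun t ht => by
      have htI : t ∈ Set.Icc (0:ℝ) T := Ico_subset_Icc_self ht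
      rw [hrew t htI, norm_neg]
      calc ‖P t (P' t (w t))‖ ≤ ‖P t‖ * ‖P' t (w t)‖ := (P t).le_opNorm _
        _ ≤ ‖P t‖ * (‖P' t‖ * ‖w t‖) :=
            mul_le_mul_of_nonneg_left ((P' t).le_opNorm _) (norm_nonneg _)
        _ = (‖P t‖ * ‖P' t‖) * ‖w t‖ := by ring
        _ ≤ K * ‖w t‖ := by
            refine mul_le_mul_of_nonneg_right ?_ (norm_nonneg _)
            refine le_trans (le_abs_self _) ?_
            have := hK t htI
            rwa [Real.norm_eq_abs] at this
        _ = K * ‖w t‖ + 0 := by ring)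
  intro s hs
  have := hb s hs
  rw [gronwallBound_ε0] at this
  have hnorm : ‖w s‖ ≤ 0 := by simpa using this
  have : w s = 0 := norm_le_zero_iff.mp hnorm
  have := sub_eq_zero.mp this
  simpa [hw] using this

/-- Parallel transport `u̇ = Ṗ u` along a C¹ family of orthogonal projections keeps vectors in
the range of `P(s)` and preserves inner products. -/
theorem stmt_7 {𝓗 : Type*} [NormedAddCommGroup 𝓗] [InnerProductSpace ℂ 𝓗] [CompleteSpace 𝓗]
    (T : ℝ) (hT : 0 < T)
    (P P' : ℝ → (𝓗 →L[ℂ] 𝓗))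
    (hP : ∀ s ∈ Set.Icc (0:ℝ) T, HasDerivWithinAt P (P' s) (Set.Icc (0:ℝ) T) s)
    (hP'cont : ContinuousOn P' (Set.Icc (0:ℝ) T))
    (hproj : ∀ s ∈ Set.Icc (0:ℝ) T, IsSelfAdjoint (P s) ∧ P s * P s = P s)
    (u v : ℝ → 𝓗)
    (hu : ∀ s ∈ Set.Icc (0:ℝ) T, HasDerivWithinAt u (P' s (u s)) (Set.Icc (0:ℝ) T) s)
    (hv : ∀ s ∈ Set.Icc (0:ℝ) T, HasDerivWithinAt v (P' s (v s)) (Set.Icc (0:ℝ) T) s)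
    (hu0 : P 0 (u 0) = u 0) (hv0 : P 0 (v 0) = v 0) :
    ∀ s ∈ Set.Icc (0:ℝ) T,
      P s (u s) = u s ∧ (inner ℂ (u s) (v s) : ℂ) = inner ℂ (u 0) (v 0) := by
  have h0T : (0:ℝ) ∈ Set.Icc (0:ℝ) T := ⟨le_refl _, hT.le⟩
  have hud : UniqueDiffOn ℝ (Set.Icc (0:ℝ) T) := uniqueDiffOn_Icc hT
  -- key algebraic identity : P P' P = 0
  have hPP'P : ∀ s ∈ Set.Icc (0:ℝ) T, P s * P' s * P s = 0 := by
    intro s hs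
    have h1 : HasDerivWithinAt (fun t => P t * P t) (P' s * P s + P s * P' s)
        (Set.Icc (0:ℝ) T) s := (hP s hs).mul (hP s hs)
    have h2 : HasDerivWithinAt (fun t => P t * P t) (P' s) (Set.Icc (0:ℝ) T) s :=
      (hP s hs).congr (fun t ht => (hproj t ht).2) ((hproj s hs).2)
    have heq : P' s = P' s * P s + P s * P' s :=
      (h2.derivWithin (hud s hs)).symm.trans (h1.derivWithin (hud s hs))
    have hPidem := (hproj s hs).2
    have h3 : P s * P' s * P s = P s * P' s * P s + P s * P' s * P s := by
      calc P s * P' s * P s = P s * (P' s * P s + P s * P' s) * P s := by rw [← heq]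
        _ = P s * P' s * (P s * P s) + (P s * P s) * (P' s * P s) := by noncomm_ring
        _ = P s * P' s * P s + P s * (P' s * P s) := by rw [hPidem]
        _ = P s * P' s * P s + P s * P' s * P s := by rw [mul_assoc]
    have h4 : P s * P' s * P s + P s * P' s * P s = P s * P' s * P s + 0 := by
      rw [add_zero]; exact h3.symm
    exact (add_left_cancel h4)
  have hrange_u : ∀ s ∈ Set.Icc (0:ℝ) T, P s (u s) = u s :=
    stmt_7_aux T P P' hP hP'cont hPP'P u hu h0T hu0
  have hrange_v : ∀ s ∈ Set.Icc (0:ℝ) T, P s (v s) = v s :=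
    stmt_7_aux T P P' hP hP'cont hPP'P v hv h0T hv0
  -- the inner product is constant
  have hg : ∀ s ∈ Set.Icc (0:ℝ) T,
      HasDerivWithinAt (fun t => (inner ℂ (u t) (v t) : ℂ)) 0 (Set.Icc (0:ℝ) T) s := by
    intro s hs
    have h := HasDerivWithinAt.inner ℂ (hu s hs) (hv s hs)
    have hsym : ∀ x y : 𝓗, (inner ℂ ((P s) x) y : ℂ) = inner ℂ x ((P s) y) :=
      (ContinuousLinearMap.isSelfAdjoint_iff_isSymmetric.mp (hproj s hs).1)
    have hX : ∀ x : 𝓗, P s (P' s (P s x)) = 0 := by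
      intro x
      have := congrArg (fun A : 𝓗 →L[ℂ] 𝓗 => A x) (hPP'P s hs)
      simpa [ContinuousLinearMap.mul_apply] using this
    have h1 : (inner ℂ (u s) (P' s (v s)) : ℂ) = 0 := by
      calc (inner ℂ (u s) (P' s (v s)) : ℂ)
          = inner ℂ ((P s) (u s)) (P' s (v s)) := by rw [hrange_u s hs]
        _ = inner ℂ (u s) ((P s) (P' s (v s))) := hsym _ _
        _ = inner ℂ (u s) ((P s) (P' s ((P s) (v s)))) := by rw [hrange_v s hs]
        _ = 0 := by rw [hX]; simp
    have h2 : (inner ℂ (P' s (u s)) (v s) : ℂ) = 0 := by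
      calc (inner ℂ (P' s (u s)) (v s) : ℂ)
          = inner ℂ (P' s (u s)) ((P s) (v s)) := by rw [hrange_v s hs]
        _ = inner ℂ ((P s) (P' s (u s))) (v s) := (hsym _ _).symm
        _ = inner ℂ ((P s) (P' s ((P s) (u s)))) (v s) := by rw [hrange_u s hs]
        _ = 0 := by rw [hX]; simp
    rw [h1, h2, add_zero] at h
    exact h
  have hconst := constant_of_has_deriv_right_zero
    (f := fun t => (inner ℂ (u t) (v t) : ℂ)) (a := 0) (b := T)
    (fun s hs => (hg s hs).continuousWithinAt)
    (fun t ht => (hg t (Ico_subset_Icc_self ht)).mono_of_mem_nhdsWithin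
      (Icc_mem_nhdsGE_of_mem ht))
  intro s hs
  exact ⟨hrange_u s hs, hconst s hs⟩
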